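/- arXiv:1707.08861 — 3 statements merged into one kernel-verified Lean document; each statement's English description precedes it below -/
import Mathlib

section
/- (3/2-approximation of good swap edges) Let e be a failing edge of an SPT T, let g = (x,y) be a swap edge for e minimizing d_T(s,x') + w(x',v') over all swap edges (x',v') for e, and let f be a swap edge minimizing μ. Then μ(g) ≤ (3/2)·μ(f). -/
open SimpleGraph

/-- The weighted length of a walk. -/
noncomputable def wlen {V : Type*} (W : V → V → ℝ) {G : SimpleGraph V} {u v : V}
    (p : G.Walk u v) : ℝ :=
  (p.darts.map (fun d => W d.toProd.1 d.toProd.2)).sum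

/-- The weighted distance between two vertices of a graph: the infimum of the
weighted lengths of all walks joining them. -/
noncomputable def wdist {V : Type*} (W : V → V → ℝ) (G : SimpleGraph V) (u v : V) : ℝ :=
  sInf {x : ℝ | ∃ p : G.Walk u v, x = wlen W p}

section Helpers

variable {V : Type*} {W : V → V → ℝ}

lemma wlen_nil {G : SimpleGraph V} {u : V} : wlen W (Walk.nil : G.Walk u u) = 0 := by
  simp [wlen]

lemma wlen_cons {G : SimpleGraph V} {u v w : V} (h : G.Adj u v) (p : G.Walk v w) :
    wlen W (Walk.cons h p) = W u v + wlen W p := by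
  simp [wlen]

lemma wlen_append {G : SimpleGraph V} {u v w : V} (p : G.Walk u v) (q : G.Walk v w) :
    wlen W (p.append q) = wlen W p + wlen W q := by
  simp [wlen, Walk.darts_append]

lemma wlen_nonneg {G : SimpleGraph V} (hW : ∀ a b, G.Adj a b → 0 ≤ W a b)
    {u v : V} (p : G.Walk u v) : 0 ≤ wlen W p := by
  induction p with
  | nil => simp [wlen]
  | cons h q ih => rw [wlen_cons]; exact add_nonneg (hW _ _ h) ih

lemma wlen_transfer {G H : SimpleGraph V} {u v : V} (p : G.Walk u v) :
    ∀ (hp : ∀ e ∈ p.edges, e ∈ H.edgeSet), wlen W (p.transfer H hp) = wlen W p := by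
  induction p with
  | nil => intro hp; rfl
  | cons h q ih =>
    intro hp
    simp only [Walk.transfer, wlen_cons]
    exact (wlen_cons _ _).trans (congrArg (W _ _ + ·) (ih _))

lemma wlen_mapLe {G H : SimpleGraph V} (hGH : G ≤ H) {u v : V} (p : G.Walk u v) :
    wlen W (p.mapLe hGH) = wlen W p := by
  induction p with
  | nil => simp [Walk.mapLe, wlen_nil]
  | cons h q ih =>
    simp only [Walk.mapLe, Walk.map_cons] at *
    rw [wlen_cons, wlen_cons, ih]
    rfl

lemma sum_le_of_sublist {l₁ l₂ : List ℝ} (h : List.Sublist l₁ l₂) (h0 : ∀ a ∈ l₂, 0 ≤ a) :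
    l₁.sum ≤ l₂.sum := by
  induction h with
  | slnil => simp
  | cons a h ih =>
    simp only [List.sum_cons]
    have h1 := ih (fun x hx => h0 x (List.mem_cons_of_mem _ hx))
    have h2 := h0 a List.mem_cons_self
    linarith
  | cons_cons a h ih =>
    simp only [List.sum_cons]
    have h1 := ih (fun x hx => h0 x (List.mem_cons_of_mem _ hx))
    linarith

lemma wlen_bypass_le [DecidableEq V] {G : SimpleGraph V}
    (hW : ∀ a b, G.Adj a b → 0 ≤ W a b) {u v : V} (p : G.Walk u v) :
    wlen W p.bypass ≤ wlen W p := by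
  have hnd : p.bypass.darts.Nodup :=
    Walk.darts_nodup_of_support_nodup p.bypass_isPath.support_nodup
  obtain ⟨l, hperm, hsl⟩ := hnd.subperm p.darts_bypass_subset
  have h1 : wlen W p.bypass = (l.map fun d => W d.toProd.1 d.toProd.2).sum :=
    ((hperm.map _).sum_eq).symm
  rw [h1, wlen]
  refine sum_le_of_sublist (hsl.map _) ?_
  intro r hr
  simp only [List.mem_map] at hr
  obtain ⟨d, _, rfl⟩ := hr
  exact hW _ _ d.adj

lemma wdist_le_wlen {H : SimpleGraph V} (hW : ∀ a b, H.Adj a b → 0 ≤ W a b)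
    {u v : V} (p : H.Walk u v) : wdist W H u v ≤ wlen W p := by
  apply csInf_le
  · exact ⟨0, by rintro r ⟨q, rfl⟩; exact wlen_nonneg hW q⟩
  · exact ⟨p, rfl⟩

lemma le_wdist {H : SimpleGraph V} {u v : V} (h : H.Reachable u v) {c : ℝ}
    (hc : ∀ p : H.Walk u v, c ≤ wlen W p) : c ≤ wdist W H u v := by
  apply le_csInf
  · obtain ⟨p⟩ := h; exact ⟨wlen W p, p, rfl⟩
  · rintro r ⟨q, rfl⟩; exact hc q

lemma wdist_nonneg {H : SimpleGraph V} (hW : ∀ a b, H.Adj a b → 0 ≤ W a b)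
    {u v : V} (h : H.Reachable u v) : 0 ≤ wdist W H u v :=
  le_wdist h (fun p => wlen_nonneg hW p)

lemma wdist_self {H : SimpleGraph V} (hW : ∀ a b, H.Adj a b → 0 ≤ W a b)
    (u : V) : wdist W H u u = 0 := by
  refine le_antisymm ?_ (wdist_nonneg hW (Reachable.refl u))
  have := wdist_le_wlen hW (Walk.nil : H.Walk u u)
  rwa [wlen_nil] at this

lemma exists_wdist_path [Fintype V] {H : SimpleGraph V}
    (hW : ∀ a b, H.Adj a b → 0 ≤ W a b) {u v : V} (h : H.Reachable u v) :
    ∃ p : H.Walk u v, p.IsPath ∧ wdist W H u v = wlen W p := by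
  classical
  have hne : (Finset.univ : Finset (H.Path u v)).Nonempty := by
    obtain ⟨q⟩ := h
    exact ⟨⟨q.bypass, q.bypass_isPath⟩, Finset.mem_univ _⟩
  obtain ⟨p0, -, hp0min⟩ :=
    Finset.exists_min_image Finset.univ (fun p : H.Path u v => wlen W p.1) hne
  refine ⟨p0.1, p0.2, le_antisymm (wdist_le_wlen hW _) ?_⟩
  apply le_wdist h
  intro q
  calc wlen W p0.1 ≤ wlen W q.bypass := hp0min ⟨q.bypass, q.bypass_isPath⟩ (Finset.mem_univ _)
    _ ≤ wlen W q := wlen_bypass_le hW q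

lemma wdist_triangle [Fintype V] {H : SimpleGraph V}
    (hW : ∀ a b, H.Adj a b → 0 ≤ W a b) {u v w : V}
    (h1 : H.Reachable u v) (h2 : H.Reachable v w) :
    wdist W H u w ≤ wdist W H u v + wdist W H v w := by
  obtain ⟨p, -, hp⟩ := exists_wdist_path hW h1
  obtain ⟨q, -, hq⟩ := exists_wdist_path hW h2
  rw [hp, hq, ← wlen_append]
  exact wdist_le_wlen hW _

lemma wdist_le_of_adj {H : SimpleGraph V} (hW : ∀ a b, H.Adj a b → 0 ≤ W a b)
    {u v : V} (h : H.Adj u v) : wdist W H u v ≤ W u v := by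
  have := wdist_le_wlen hW (Walk.cons h Walk.nil)
  rwa [wlen_cons, wlen_nil, add_zero] at this

lemma wlen_reverse (hWs : ∀ a b : V, W a b = W b a) {H : SimpleGraph V} {u v : V}
    (p : H.Walk u v) : wlen W p.reverse = wlen W p := by
  unfold wlen
  rw [Walk.darts_reverse, List.map_reverse, List.sum_reverse, List.map_map]
  congr 1
  apply List.map_congr_left
  intro d _
  exact hWs _ _

lemma wdist_symm (hWs : ∀ a b : V, W a b = W b a) {H : SimpleGraph V}
    (hW : ∀ a b, H.Adj a b → 0 ≤ W a b) {u v : V} (h : H.Reachable u v) :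
    wdist W H u v = wdist W H v u := by
  have key : ∀ (a b : V), H.Reachable a b → wdist W H a b ≤ wdist W H b a := by
    intro a b hr
    apply le_wdist hr.symm
    intro q
    have := wdist_le_wlen hW q.reverse
    rwa [wlen_reverse hWs] at this
  exact le_antisymm (key u v h) (key v u h.symm)

lemma wdist_mono {H₁ H₂ : SimpleGraph V} (hle : H₁ ≤ H₂)
    (hW₂ : ∀ a b, H₂.Adj a b → 0 ≤ W a b) {u v : V} (h : H₁.Reachable u v) :
    wdist W H₂ u v ≤ wdist W H₁ u v := by
  apply le_csInf (by obtain ⟨p⟩ := h; exact ⟨_, p, rfl⟩)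
  rintro r ⟨q, rfl⟩
  calc wdist W H₂ u v ≤ wlen W (q.mapLe hle) := wdist_le_wlen hW₂ _
    _ = wlen W q := wlen_mapLe hle q

lemma parity_cross [DecidableEq V] {T : SimpleGraph V} {a b : V}
    (hnra : ¬ (T.deleteEdges {s(a, b)}).Reachable b a) {u v : V} (p : T.Walk u v) :
    (((T.deleteEdges {s(a, b)}).Reachable b u ↔
      (T.deleteEdges {s(a, b)}).Reachable b v) ↔
      Even (p.edges.count (s(a, b)))) := by
  induction p with
  | nil => simp
  | @cons c d w h q ih =>
    rw [Walk.edges_cons, List.count_cons]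
    by_cases hcd : s(c, d) = s(a, b)
    · have hcross : ((T.deleteEdges {s(a, b)}).Reachable b c ↔
          ¬ (T.deleteEdges {s(a, b)}).Reachable b d) := by
        rw [Sym2.eq_iff] at hcd
        rcases hcd with ⟨rfl, rfl⟩ | ⟨rfl, rfl⟩
        · exact ⟨fun h' => absurd h' hnra, fun h' => absurd (Reachable.refl _) h'⟩
        · exact ⟨fun _ => hnra, fun _ => Reachable.refl _⟩
      rw [if_pos (beq_iff_eq.mpr hcd), Nat.even_add_one]
      tauto
    · have hadj : (T.deleteEdges {s(a, b)}).Adj c d := by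
        rw [deleteEdges_adj]
        exact ⟨h, by simpa using hcd⟩
      have hstep : ((T.deleteEdges {s(a, b)}).Reachable b c ↔
          (T.deleteEdges {s(a, b)}).Reachable b d) :=
        ⟨fun h' => h'.trans hadj.reachable, fun h' => h'.trans hadj.symm.reachable⟩
      rw [if_neg (fun h => hcd (beq_iff_eq.mp h)), add_zero]
      tauto

lemma same_side_wdist [Fintype V] {T : SimpleGraph V}
    (hW : ∀ a b, T.Adj a b → 0 ≤ W a b) {a b : V} (hT : T.Connected)
    (hnra : ¬ (T.deleteEdges {s(a, b)}).Reachable b a) {u v : V}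
    (huv : ((T.deleteEdges {s(a, b)}).Reachable b u ↔
      (T.deleteEdges {s(a, b)}).Reachable b v)) :
    (T.deleteEdges {s(a, b)}).Reachable u v ∧
      wdist W (T.deleteEdges {s(a, b)}) u v ≤ wdist W T u v := by
  classical
  obtain ⟨p, hpath, hp⟩ := exists_wdist_path hW (hT.preconnected u v)
  have hcount : p.edges.count (s(a, b)) = 0 := by
    have heven := (parity_cross hnra p).mp huv
    have hnodup : p.edges.Nodup := Walk.edges_nodup_of_support_nodup hpath.support_nodup
    have hle := List.nodup_iff_count_le_one.mp hnodup (s(a, b))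
    rcases heven with ⟨k, hk⟩
    omega
  have hmem : ∀ e' ∈ p.edges, e' ∈ (T.deleteEdges {s(a, b)}).edgeSet := by
    intro e' he'
    rw [edgeSet_deleteEdges]
    refine ⟨p.edges_subset_edgeSet he', ?_⟩
    simp only [Set.mem_singleton_iff]
    intro hcontra
    rw [← hcontra] at hcount
    exact absurd hcount (by simpa [List.count_eq_zero] using he')
  refine ⟨⟨p.transfer _ hmem⟩, ?_⟩
  have hW' : ∀ a' b', (T.deleteEdges {s(a, b)}).Adj a' b' → 0 ≤ W a' b' :=
    fun a' b' h' => hW _ _ ((deleteEdges_le _ : T.deleteEdges _ ≤ T) h')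
  calc wdist W (T.deleteEdges {s(a, b)}) u v ≤ wlen W (p.transfer _ hmem) :=
        wdist_le_wlen hW' _
    _ = wlen W p := wlen_transfer p hmem
    _ = wdist W T u v := hp.symm

end Helpers

/-- `(x, y)` is a swap edge for the failing tree edge `e = (a,b)` (with `b` the child):
a non-tree edge of `G` whose endpoint `x` lies in the component of `T − e` containing the
source and whose endpoint `y` lies in the detached component, i.e. the one containing `b`. -/
def swapEdge {V : Type*} (T G : SimpleGraph V) (a b x y : V) : Prop :=
  G.Adj x y ∧ s(x, y) ∉ T.edgeSet ∧
    ¬ (T.deleteEdges {s(a, b)}).Reachable b x ∧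
    (T.deleteEdges {s(a, b)}).Reachable b y

/-- The max-stretch `μ` of a swap edge `(x, y)` for the failing edge `e = (a,b)`:
the supremum over the vertices `u` of the detached subtree `T_b` of
`d_{T_{e/f}}(s,u) / d_{G−e}(s,u)`, where `d_{T_{e/f}}(s,u) = d_T(s,x) + w(x,y) + d_T(y,u)`. -/
noncomputable def muSt {V : Type*} (W : V → V → ℝ) (T G : SimpleGraph V)
    (s a b x y : V) : ℝ :=
  sSup {r : ℝ | ∃ u : V, (T.deleteEdges {s(a, b)}).Reachable b u ∧
    r = (wdist W T s x + W x y + wdist W T y u) /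
        wdist W (G.deleteEdges {s(a, b)}) s u}

/-- 3/2-approximation of good swap edges.  Let `e = (a,b)` be a failing edge of an SPT `T`
of a 2-edge-connected positively weighted graph `G`, let `g = (x,y)` be a swap edge for `e`
minimizing `d_T(s,x') + w(x',v')` over all swap edges `(x',v')` for `e`, and let
`f = (x',y')` be a swap edge minimizing the max-stretch `μ`.  Then `μ(g) ≤ (3/2)·μ(f)`. -/
theorem good_swap_edge_three_halves_approx {V : Type*} [Fintype V]
    (G T : SimpleGraph V) (W : V → V → ℝ) (s a b : V)
    (hWpos : ∀ u w : V, G.Adj u w → 0 < W u w)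
    (hWsymm : ∀ u w : V, W u w = W w u)
    (hGconn : G.Connected)
    (h2ec : ∀ e' ∈ G.edgeSet, (G.deleteEdges {e'}).Connected)
    (hTG : T ≤ G) (hT : T.IsTree)
    (hSPT : ∀ u : V, wdist W T s u = wdist W G s u)
    (he : s(a, b) ∈ T.edgeSet)
    (hb : ¬ (T.deleteEdges {s(a, b)}).Reachable s b)
    (x y : V) (hg : swapEdge T G a b x y)
    (hgmin : ∀ x' v' : V, swapEdge T G a b x' v' →
      wdist W T s x + W x y ≤ wdist W T s x' + W x' v')
    (x' y' : V) (hf : swapEdge T G a b x' y')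
    (hfmin : ∀ x'' v'' : V, swapEdge T G a b x'' v'' →
      muSt W T G s a b x' y' ≤ muSt W T G s a b x'' v'') :
    muSt W T G s a b x y ≤ (3 / 2) * muSt W T G s a b x' y' := by
  classical
  obtain ⟨hgadj, hgT, hgx, hgy⟩ := hg
  obtain ⟨hfadj, hfT, hfx, hfy⟩ := hf
  -- notation
  have hWG : ∀ u w : V, G.Adj u w → 0 ≤ W u w := fun u w h => (hWpos u w h).le
  have hWT : ∀ u w : V, T.Adj u w → 0 ≤ W u w := fun u w h => hWG u w (hTG h)
  have hGdle : G.deleteEdges {s(a, b)} ≤ G := deleteEdges_le _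
  have hWGd : ∀ u w : V, (G.deleteEdges {s(a, b)}).Adj u w → 0 ≤ W u w :=
    fun u w h => hWG u w (hGdle h)
  have hTdleGd : T.deleteEdges {s(a, b)} ≤ G.deleteEdges {s(a, b)} := by
    intro u w h
    rw [deleteEdges_adj] at h ⊢
    exact ⟨hTG h.1, h.2⟩
  have heG : s(a, b) ∈ G.edgeSet := edgeSet_mono hTG he
  have hGdconn : (G.deleteEdges {s(a, b)}).Connected := h2ec _ heG
  have hTconn : T.Connected := hT.isConnected
  have hTab : T.Adj a b := T.mem_edgeSet.mp he
  have hbridge : ¬ (T.deleteEdges {s(a, b)}).Reachable a b :=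
    ((isBridge_iff.mp ((isAcyclic_iff_forall_adj_isBridge.mp hT.IsAcyclic) hTab)))
  have hnra : ¬ (T.deleteEdges {s(a, b)}).Reachable b a := fun h => hbridge h.symm
  have hnRs : ¬ (T.deleteEdges {s(a, b)}).Reachable b s := fun h => hb h.symm
  -- distances on the same side of the cut
  have hGdT : ∀ u v : V, ((T.deleteEdges {s(a, b)}).Reachable b u ↔
      (T.deleteEdges {s(a, b)}).Reachable b v) →
      wdist W (G.deleteEdges {s(a, b)}) u v ≤ wdist W T u v := by
    intro u v hiff
    obtain ⟨hreach, hle⟩ := same_side_wdist hWT hTconn hnra hiff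
    exact le_trans (wdist_mono hTdleGd hWGd hreach) hle
  have hT_le_Gd : ∀ u : V, wdist W T s u ≤ wdist W (G.deleteEdges {s(a, b)}) s u := by
    intro u
    rw [hSPT u]
    exact wdist_mono hGdle hWG (hGdconn.preconnected s u)
  have hLpos : 0 < wdist W T s x + W x y :=
    add_pos_of_nonneg_of_pos (wdist_nonneg hWT (hTconn.preconnected s x)) (hWpos x y hgadj)
  have hLL' : wdist W T s x + W x y ≤ wdist W T s x' + W x' y' :=
    hgmin x' y' ⟨hfadj, hfT, hfx, hfy⟩
  have hGdxy : (G.deleteEdges {s(a, b)}).Adj x y := by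
    rw [deleteEdges_adj]
    refine ⟨hgadj, ?_⟩
    simp only [Set.mem_singleton_iff]
    intro h; rw [h] at hgT; exact hgT he
  have hGdx'y' : (G.deleteEdges {s(a, b)}).Adj x' y' := by
    rw [deleteEdges_adj]
    refine ⟨hfadj, ?_⟩
    simp only [Set.mem_singleton_iff]
    intro h; rw [h] at hfT; exact hfT he
  -- the crossing lemma
  have cross : ∀ (u c : V) (p : (G.deleteEdges {s(a, b)}).Walk c u),
      (T.deleteEdges {s(a, b)}).Reachable b u →
      ¬ (T.deleteEdges {s(a, b)}).Reachable b c →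
      wdist W T s x + W x y ≤ wdist W (G.deleteEdges {s(a, b)}) s c + wlen W p := by
    intro u c p
    induction p with
    | nil => intro hu hc; exact absurd hu hc
    | @cons c' v' u' hadj q ih =>
      intro hu hc
      rw [wlen_cons]
      by_cases hv : (T.deleteEdges {s(a, b)}).Reachable b v'
      · have hGadj : G.Adj c' v' := hGdle hadj
        have hnT : s(c', v') ∉ T.edgeSet := by
          intro hmem
          have hne : s(c', v') ∉ ({s(a, b)} : Set (Sym2 V)) :=
            (deleteEdges_adj.mp hadj).2
          have hTdadj : (T.deleteEdges {s(a, b)}).Adj c' v' := by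
            rw [deleteEdges_adj]
            exact ⟨T.mem_edgeSet.mp hmem, hne⟩
          exact hc (hv.trans hTdadj.symm.reachable)
        have h1 := hgmin c' v' ⟨hGadj, hnT, hc, hv⟩
        have h2 : wdist W T s c' ≤ wdist W (G.deleteEdges {s(a, b)}) s c' := hT_le_Gd c'
        have h3 : 0 ≤ wlen W q := wlen_nonneg hWGd q
        linarith
      · have ih' := ih hu hv
        have htr : wdist W (G.deleteEdges {s(a, b)}) s v' ≤
            wdist W (G.deleteEdges {s(a, b)}) s c' + W c' v' := by
          have t1 := wdist_triangle hWGd (hGdconn.preconnected s c') (hGdconn.preconnected c' v')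
          have t2 := wdist_le_of_adj hWGd hadj
          linarith
        linarith
  have hcross : ∀ u : V, (T.deleteEdges {s(a, b)}).Reachable b u →
      wdist W T s x + W x y ≤ wdist W (G.deleteEdges {s(a, b)}) s u := by
    intro u hu
    apply le_wdist (hGdconn.preconnected s u)
    intro p
    have := cross u s p hu hnRs
    rwa [wdist_self hWGd, zero_add] at this
  -- basic facts about μ(f)
  have hbdd : BddAbove {r : ℝ | ∃ u : V, (T.deleteEdges {s(a, b)}).Reachable b u ∧
      r = (wdist W T s x' + W x' y' + wdist W T y' u) /
        wdist W (G.deleteEdges {s(a, b)}) s u} := by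
    apply Set.Finite.bddAbove
    apply Set.Finite.subset (Set.finite_range (fun u : V =>
      (wdist W T s x' + W x' y' + wdist W T y' u) /
        wdist W (G.deleteEdges {s(a, b)}) s u))
    rintro r ⟨u, -, rfl⟩
    exact ⟨u, rfl⟩
  have hratio_f : ∀ u : V, (T.deleteEdges {s(a, b)}).Reachable b u →
      (wdist W T s x' + W x' y' + wdist W T y' u) /
        wdist W (G.deleteEdges {s(a, b)}) s u ≤ muSt W T G s a b x' y' := by
    intro u hu
    exact le_csSup hbdd ⟨u, hu, rfl⟩
  -- numerators of f dominate the distance in G − e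
  have hnum_f : ∀ u : V, (T.deleteEdges {s(a, b)}).Reachable b u →
      wdist W (G.deleteEdges {s(a, b)}) s u ≤
        wdist W T s x' + W x' y' + wdist W T y' u := by
    intro u hu
    have t1 := wdist_triangle hWGd (hGdconn.preconnected s x') (hGdconn.preconnected x' u)
    have t2 := wdist_triangle hWGd (hGdconn.preconnected x' y') (hGdconn.preconnected y' u)
    have t3 := wdist_le_of_adj hWGd hGdx'y'
    have t4 : wdist W (G.deleteEdges {s(a, b)}) s x' ≤ wdist W T s x' :=
      hGdT s x' (iff_of_false hnRs hfx)
    have t5 : wdist W (G.deleteEdges {s(a, b)}) y' u ≤ wdist W T y' u :=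
      hGdT y' u (iff_of_true hfy hu)
    linarith
  have hDb_pos : ∀ u : V, (T.deleteEdges {s(a, b)}).Reachable b u →
      0 < wdist W (G.deleteEdges {s(a, b)}) s u :=
    fun u hu => lt_of_lt_of_le hLpos (hcross u hu)
  have hmuf1 : 1 ≤ muSt W T G s a b x' y' := by
    have h1 := hratio_f b (Reachable.refl b)
    have h2 := hnum_f b (Reachable.refl b)
    have h3 := hDb_pos b (Reachable.refl b)
    have h4 : (1 : ℝ) ≤ (wdist W T s x' + W x' y' + wdist W T y' b) /
        wdist W (G.deleteEdges {s(a, b)}) s b := by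
      rw [le_div_iff₀ h3]
      linarith
    linarith
  -- distance from s to y in G − e is at most L
  have hDy_le_L : wdist W (G.deleteEdges {s(a, b)}) s y ≤ wdist W T s x + W x y := by
    have t1 := wdist_triangle hWGd (hGdconn.preconnected s x) (hGdconn.preconnected x y)
    have t2 := wdist_le_of_adj hWGd hGdxy
    have t3 : wdist W (G.deleteEdges {s(a, b)}) s x ≤ wdist W T s x :=
      hGdT s x (iff_of_false hnRs hgx)
    linarith
  have hDy_pos : 0 < wdist W (G.deleteEdges {s(a, b)}) s y := hDb_pos y hgy
  -- bound on d_T(y, y')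
  have hr_bound : wdist W T s x' + W x' y' + wdist W T y' y ≤
      muSt W T G s a b x' y' * (wdist W T s x + W x y) := by
    have h1 := hratio_f y hgy
    rw [div_le_iff₀ hDy_pos] at h1
    have h2 : muSt W T G s a b x' y' * wdist W (G.deleteEdges {s(a, b)}) s y ≤
        muSt W T G s a b x' y' * (wdist W T s x + W x y) :=
      mul_le_mul_of_nonneg_left hDy_le_L (by linarith)
    linarith
  -- final bound, vertex by vertex
  have key : ∀ r ∈ {r : ℝ | ∃ u : V, (T.deleteEdges {s(a, b)}).Reachable b u ∧
      r = (wdist W T s x + W x y + wdist W T y u) /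
        wdist W (G.deleteEdges {s(a, b)}) s u},
      r ≤ (3 / 2) * muSt W T G s a b x' y' := by
    rintro r ⟨u, hu, rfl⟩
    have hDu_ge_L := hcross u hu
    have hDu_pos := hDb_pos u hu
    have hA := hratio_f u hu
    rw [div_le_iff₀ hDu_pos] at hA
    -- triangle through y'
    have htri : wdist W T y u ≤ wdist W T y y' + wdist W T y' u :=
      wdist_triangle hWT (hTconn.preconnected y y') (hTconn.preconnected y' u)
    have hsymm : wdist W T y y' = wdist W T y' y := wdist_symm hWsymm hWT (hTconn.preconnected y y')
    -- the B bound: d_T(y,u) ≤ L + D(u)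
    have htB : wdist W T y u ≤ (wdist W T s x + W x y) +
        wdist W (G.deleteEdges {s(a, b)}) s u := by
      have t1 : wdist W T y u ≤ wdist W T y s + wdist W T s u :=
        wdist_triangle hWT (hTconn.preconnected y s) (hTconn.preconnected s u)
      have t2 : wdist W T y s = wdist W T s y := wdist_symm hWsymm hWT (hTconn.preconnected y s)
      have t3 : wdist W T s y ≤ wdist W T s x + W x y := by
        rw [hSPT y]
        have u1 := wdist_triangle hWG (hGconn.preconnected s x) (hGconn.preconnected x y)
        have u2 := wdist_le_of_adj hWG hgadj
        rw [← hSPT x] at u1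
        linarith
      have t4 := hT_le_Gd u
      linarith
    have hnn : 0 ≤ wdist W T y u := wdist_nonneg hWT (hTconn.preconnected y u)
    rw [div_le_iff₀ hDu_pos]
    rcases le_total (muSt W T G s a b x' y') 2 with h2 | h2
    · nlinarith [mul_nonneg (sub_nonneg.2 hmuf1)
        (sub_nonneg.2 hDu_ge_L), mul_nonneg (sub_nonneg.2 h2) hDu_pos.le,
        mul_nonneg (sub_nonneg.2 h2) hLpos.le]
    · nlinarith [mul_nonneg (sub_nonneg.2 h2) hDu_pos.le]
  have hne : {r : ℝ | ∃ u : V, (T.deleteEdges {s(a, b)}).Reachable b u ∧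
      r = (wdist W T s x + W x y + wdist W T y u) /
        wdist W (G.deleteEdges {s(a, b)}) s u}.Nonempty :=
    ⟨_, b, Reachable.refl b, rfl⟩
  exact csSup_le hne key
end

section
/- (Stretch-3 guarantee) Let e=(a,b) be a failing edge of an SPT T of a 2-edge-connected positively weighted graph G, and let g be the swap edge for e that lies on a shortest path in G−e from s to b. Then for every vertex u in the detached subtree T_b, d_{T_{e/g}}(s,u) ≤ 3·d_{G−e}(s,u); hence μ(g) ≤ 3 and λ(g) ≤ 3, and in particular a best swap edge f for either criterion satisfies μ(f) ≤ 3 and λ(f) ≤ 3. -/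
open SimpleGraph

/-- The average stretch `λ` of a swap edge `(x, y)` for `e = (a,b)`, where `U` is the
vertex set of the detached subtree `T_b`. -/
noncomputable def lamSt {V : Type*} [Fintype V] (W : V → V → ℝ) (T G : SimpleGraph V)
    (s a b : V) (U : Finset V) (x y : V) : ℝ :=
  (∑ u ∈ U, (wdist W T s x + W x y + wdist W T y u) /
      wdist W (G.deleteEdges {s(a, b)}) s u) / U.card


namespace Aux

variable {V : Type*} {W : V → V → ℝ} {H : SimpleGraph V} {u v w : V}

lemma wlen_nil : wlen W (SimpleGraph.Walk.nil : H.Walk u u) = 0 := rfl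

lemma wlen_cons (h : H.Adj u v) (p : H.Walk v w) :
    wlen W (SimpleGraph.Walk.cons h p) = W u v + wlen W p := by
  simp [wlen, Walk.darts_cons]

lemma wlen_append (p : H.Walk u v) (q : H.Walk v w) :
    wlen W (p.append q) = wlen W p + wlen W q := by
  simp [wlen, Walk.darts_append]

lemma wlen_nonneg (h0 : ∀ a b, H.Adj a b → 0 ≤ W a b) (p : H.Walk u v) :
    0 ≤ wlen W p := by
  induction p with
  | nil => simp [wlen_nil]
  | cons h q ih => rw [wlen_cons]; exact add_nonneg (h0 _ _ h) ih

lemma wdist_bddBelow (h0 : ∀ a b, H.Adj a b → 0 ≤ W a b) :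
    BddBelow {x : ℝ | ∃ p : H.Walk u v, x = wlen W p} :=
  ⟨0, by rintro x ⟨p, rfl⟩; exact wlen_nonneg h0 p⟩

lemma wdist_nonneg (h0 : ∀ a b, H.Adj a b → 0 ≤ W a b) :
    0 ≤ wdist W H u v :=
  Real.sInf_nonneg (by rintro x ⟨p, rfl⟩; exact wlen_nonneg h0 p)

lemma wdist_le_wlen (h0 : ∀ a b, H.Adj a b → 0 ≤ W a b) (p : H.Walk u v) :
    wdist W H u v ≤ wlen W p :=
  csInf_le (wdist_bddBelow h0) ⟨p, rfl⟩

lemma le_wdist (hne : H.Reachable u v) {c : ℝ}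
    (h : ∀ p : H.Walk u v, c ≤ wlen W p) : c ≤ wdist W H u v := by
  obtain ⟨p⟩ := hne
  exact le_csInf ⟨wlen W p, p, rfl⟩ (by rintro x ⟨q, rfl⟩; exact h q)

lemma wlen_mapLe {G : SimpleGraph V} (hle : H ≤ G) (p : H.Walk u v) :
    wlen W (p.mapLe hle) = wlen W p := by
  induction p with
  | nil => rfl
  | cons h q ih =>
    simp only [Walk.mapLe, Walk.map_cons] at *
    rw [wlen_cons, wlen_cons, ih]
    simp [Hom.ofLE_apply]

lemma wdist_mono {G : SimpleGraph V} (h0 : ∀ a b, G.Adj a b → 0 ≤ W a b)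
    (hle : H ≤ G) (hr : H.Reachable u v) :
    wdist W G u v ≤ wdist W H u v := by
  refine le_csInf (by obtain ⟨p⟩ := hr; exact ⟨wlen W p, p, rfl⟩) ?_
  rintro x ⟨p, rfl⟩
  calc wdist W G u v ≤ wlen W (p.mapLe hle) := wdist_le_wlen h0 _
    _ = wlen W p := wlen_mapLe hle p

lemma wlen_reverse (hs : ∀ a b, W a b = W b a) (p : H.Walk u v) :
    wlen W p.reverse = wlen W p := by
  induction p with
  | nil => rfl
  | cons h q ih =>
    rw [Walk.reverse_cons, wlen_append, wlen_cons, ih, wlen_cons, wlen_nil]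
    rw [hs]; ring

lemma wdist_symm (hs : ∀ a b, W a b = W b a) :
    wdist W H u v = wdist W H v u := by
  have key : ∀ (a b : V), {x : ℝ | ∃ p : H.Walk a b, x = wlen W p} =
      {x : ℝ | ∃ p : H.Walk b a, x = wlen W p} := by
    intro a b
    ext x
    constructor <;> rintro ⟨p, rfl⟩ <;> exact ⟨p.reverse, (wlen_reverse hs p).symm⟩
  unfold wdist; rw [key]

lemma wdist_triangle (h0 : ∀ a b, H.Adj a b → 0 ≤ W a b)
    (huv : H.Reachable u v) (hvw : H.Reachable v w) :
    wdist W H u w ≤ wdist W H u v + wdist W H v w := by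
  have h1 : ∀ p : H.Walk u v, wdist W H u w - wdist W H v w ≤ wlen W p := by
    intro p
    rw [sub_le_iff_le_add']
    have h2 : ∀ q : H.Walk v w, wdist W H u w - wlen W p ≤ wlen W q := by
      intro q
      rw [sub_le_iff_le_add']
      calc wdist W H u w ≤ wlen W (p.append q) := wdist_le_wlen h0 _
        _ = wlen W p + wlen W q := wlen_append p q
    have := le_wdist hvw h2
    linarith
  have := le_wdist huv h1
  linarith

lemma wdist_le_adj (h0 : ∀ a b, H.Adj a b → 0 ≤ W a b) (h : H.Adj u v) :
    wdist W H u v ≤ W u v := by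
  have := wdist_le_wlen h0 (SimpleGraph.Walk.cons h SimpleGraph.Walk.nil)
  rwa [wlen_cons, wlen_nil, add_zero] at this

end Aux


/-- Stretch-3 guarantee.  Let `e = (a,b)` be a failing edge of an SPT `T` of a
2-edge-connected positively weighted graph `G`, and let `g = (x,b)` be the swap edge for
`e` lying on a shortest path in `G−e` from `s` to `b` (so that
`d_T(s,x) + w(g) = d_{G−e}(s,b)`).  Then for every vertex `u` of the detached subtree
`T_b`, `d_{T_{e/g}}(s,u) ≤ 3·d_{G−e}(s,u)`; hence `μ(g) ≤ 3` and `λ(g) ≤ 3`, and in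
particular a best swap edge for either criterion satisfies `μ ≤ 3` (resp. `λ ≤ 3`). -/
theorem stretch_three_guarantee {V : Type*} [Fintype V]
    (G T : SimpleGraph V) (W : V → V → ℝ) (s a b : V)
    (hWpos : ∀ u w : V, G.Adj u w → 0 < W u w)
    (hWsymm : ∀ u w : V, W u w = W w u)
    (hGconn : G.Connected)
    (h2ec : ∀ e' ∈ G.edgeSet, (G.deleteEdges {e'}).Connected)
    (hTG : T ≤ G) (hT : T.IsTree)
    (hSPT : ∀ u : V, wdist W T s u = wdist W G s u)
    (he : s(a, b) ∈ T.edgeSet)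
    (hb : ¬ (T.deleteEdges {s(a, b)}).Reachable s b)
    (U : Finset V)
    (hU : ∀ u : V, u ∈ U ↔ (T.deleteEdges {s(a, b)}).Reachable b u)
    (x : V) (hg : swapEdge T G a b x b)
    (hshort : wdist W T s x + W x b =
      wdist W (G.deleteEdges {s(a, b)}) s b) :
    (∀ u ∈ U, wdist W T s x + W x b + wdist W T b u ≤
        3 * wdist W (G.deleteEdges {s(a, b)}) s u) ∧
      muSt W T G s a b x b ≤ 3 ∧
      lamSt W T G s a b U x b ≤ 3 ∧
      (∀ xf yf : V, swapEdge T G a b xf yf →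
        (∀ x' y' : V, swapEdge T G a b x' y' →
          muSt W T G s a b xf yf ≤ muSt W T G s a b x' y') →
        muSt W T G s a b xf yf ≤ 3) ∧
      (∀ xf yf : V, swapEdge T G a b xf yf →
        (∀ x' y' : V, swapEdge T G a b x' y' →
          lamSt W T G s a b U xf yf ≤ lamSt W T G s a b U x' y') →
        lamSt W T G s a b U xf yf ≤ 3) := by
  classical
  set e' : Sym2 V := s(a, b) with he'
  set Te : SimpleGraph V := T.deleteEdges {e'} with hTedef
  set Ge : SimpleGraph V := G.deleteEdges {e'} with hGedef
  have h0G : ∀ p q, G.Adj p q → 0 ≤ W p q := fun p q h => (hWpos p q h).le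
  have h0T : ∀ p q, T.Adj p q → 0 ≤ W p q := fun p q h => h0G p q (hTG h)
  have hTeT : Te ≤ T := SimpleGraph.deleteEdges_le _
  have hGeG : Ge ≤ G := SimpleGraph.deleteEdges_le _
  have h0Te : ∀ p q, Te.Adj p q → 0 ≤ W p q := fun p q h => h0T p q (hTeT h)
  have h0Ge : ∀ p q, Ge.Adj p q → 0 ≤ W p q := fun p q h => h0G p q (hGeG h)
  have hTle : Te ≤ Ge := by
    intro p q h
    rw [hTedef, SimpleGraph.deleteEdges_adj] at h
    rw [hGedef, SimpleGraph.deleteEdges_adj]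
    exact ⟨hTG h.1, h.2⟩
  have heG : e' ∈ G.edgeSet := (SimpleGraph.edgeSet_subset_edgeSet.mpr hTG) he
  have hGeconn : Ge.Connected := h2ec e' heG
  have hTconn : T.Connected := hT.isConnected
  have hbridge : ¬ Te.Reachable a b := by
    have h1 := (isAcyclic_iff_forall_edge_isBridge.mp hT.IsAcyclic) he
    rw [isBridge_iff] at h1
    exact h1
  have hba : ¬ Te.Reachable b a := fun h => hbridge h.symm
  -- key lemma: any T-walk ending at a vertex of the detached subtree is at least as
  -- long as the Te-distance from its start (if in the subtree) resp. from b (if not)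
  have key : ∀ {v u : V} (p : T.Walk v u), Te.Reachable b u →
      ((Te.Reachable b v → wdist W Te v u ≤ wlen W p) ∧
       (¬ Te.Reachable b v → wdist W Te b u ≤ wlen W p)) := by
    intro v u p
    induction p with
    | @nil u =>
      intro hu
      refine ⟨fun _ => ?_, fun h => absurd hu h⟩
      have h1 := Aux.wdist_le_wlen (H := Te) h0Te (SimpleGraph.Walk.nil (u := u))
      simpa [Aux.wlen_nil] using h1
    | @cons v m u h q ih =>
      intro hu
      obtain ⟨ih1, ih2⟩ := ih hu
      have hW0 : 0 ≤ W v m := h0T v m h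
      constructor
      · intro hv
        by_cases hm : Te.Reachable b m
        · by_cases heq : s(v, m) = e'
          · exfalso
            rw [he', Sym2.eq_iff] at heq
            rcases heq with ⟨rfl, rfl⟩ | ⟨rfl, rfl⟩
            · exact hba hv
            · exact hba hm
          · have hadj : Te.Adj v m := by
              rw [hTedef, SimpleGraph.deleteEdges_adj]
              exact ⟨h, by simpa using heq⟩
            calc wdist W Te v u ≤ wdist W Te v m + wdist W Te m u :=
                  Aux.wdist_triangle h0Te ⟨hadj.toWalk⟩ (hm.symm.trans hu)
              _ ≤ W v m + wlen W q :=
                  add_le_add (Aux.wdist_le_adj h0Te hadj) (ih1 hm)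
              _ = wlen W (SimpleGraph.Walk.cons h q) := (Aux.wlen_cons h q).symm
        · have heq : s(v, m) = e' := by
            by_contra heq
            have hadj : Te.Adj v m := by
              rw [hTedef, SimpleGraph.deleteEdges_adj]
              exact ⟨h, by simpa using heq⟩
            exact hm (hv.trans ⟨hadj.toWalk⟩)
          rw [he', Sym2.eq_iff] at heq
          rcases heq with ⟨rfl, rfl⟩ | ⟨rfl, rfl⟩
          · exact absurd hv hba
          · have h2 := ih2 hm
            rw [Aux.wlen_cons]
            linarith
      · intro hv
        by_cases hm : Te.Reachable b m
        · have heq : s(v, m) = e' := by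
            by_contra heq
            have hadj : Te.Adj v m := by
              rw [hTedef, SimpleGraph.deleteEdges_adj]
              exact ⟨h, by simpa using heq⟩
            exact hv (hm.trans ⟨hadj.symm.toWalk⟩)
          rw [he', Sym2.eq_iff] at heq
          rcases heq with ⟨rfl, rfl⟩ | ⟨rfl, rfl⟩
          · have h2 := ih1 hm
            rw [Aux.wlen_cons]
            linarith
          · exact absurd (SimpleGraph.Reachable.refl _) hv
        · have h2 := ih2 hm
          rw [Aux.wlen_cons]
          linarith
  have hbu_le_su : ∀ u : V, Te.Reachable b u → wdist W Te b u ≤ wdist W T s u := by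
    intro u hu
    exact Aux.le_wdist (hTconn.preconnected s u)
      (fun p => (key p hu).2 (fun hh => hb hh.symm))
  -- the main per-vertex estimate
  have main : ∀ u : V, Te.Reachable b u →
      wdist W T s x + W x b + wdist W T b u ≤ 3 * wdist W Ge s u := by
    intro u hu
    have d1 : wdist W Ge s b ≤ wdist W Ge s u + wdist W Ge u b :=
      Aux.wdist_triangle h0Ge (hGeconn.preconnected s u) (hGeconn.preconnected u b)
    have d2 : wdist W Ge u b ≤ wdist W Te u b := Aux.wdist_mono h0Ge hTle hu.symm
    have d3 : wdist W Te u b = wdist W Te b u := Aux.wdist_symm hWsymm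
    have d4 : wdist W Te b u ≤ wdist W T s u := hbu_le_su u hu
    have d5 : wdist W T s u ≤ wdist W Ge s u := by
      rw [hSPT u]
      exact Aux.wdist_mono h0G hGeG (hGeconn.preconnected s u)
    have d6 : wdist W T b u ≤ wdist W Te b u := Aux.wdist_mono h0T hTeT hu
    rw [hshort]
    linarith
  have hrat : ∀ u : V, Te.Reachable b u →
      (wdist W T s x + W x b + wdist W T b u) / wdist W Ge s u ≤ 3 := by
    intro u hu
    rcases eq_or_lt_of_le (Aux.wdist_nonneg h0Ge : (0:ℝ) ≤ wdist W Ge s u) with h | h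
    · rw [← h, div_zero]; norm_num
    · rw [div_le_iff₀ h]
      have h1 := main u hu
      linarith
  have hmu : muSt W T G s a b x b ≤ 3 := by
    unfold muSt
    refine Real.sSup_le ?_ (by norm_num)
    rintro r ⟨u, hu, rfl⟩
    exact hrat u hu
  have hlam : lamSt W T G s a b U x b ≤ 3 := by
    unfold lamSt
    by_cases hUe : U.card = 0
    · simp [Finset.card_eq_zero.mp hUe]
    · have hc : (0:ℝ) < U.card := by
        exact_mod_cast Nat.pos_of_ne_zero hUe
      rw [div_le_iff₀ hc]
      calc (∑ u ∈ U, (wdist W T s x + W x b + wdist W T b u) / wdist W Ge s u)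
          ≤ ∑ _u ∈ U, (3:ℝ) :=
            Finset.sum_le_sum (fun u hm => hrat u ((hU u).mp hm))
        _ = 3 * U.card := by rw [Finset.sum_const, nsmul_eq_mul]; ring
  refine ⟨fun u hm => main u ((hU u).mp hm), hmu, hlam, ?_, ?_⟩
  · intro xf yf _hf hbest
    exact le_trans (hbest x b hg) hmu
  · intro xf yf _hf hbest
    exact le_trans (hbest x b hg) hlam
end

section
/- Let e=(a,b) be a failing edge of an SPT T, and let g=(x,y) be a swap edge for e minimizing d_T(s,x')+w(x',v') over all swap edges (x',v'). Then for every vertex u in the detached subtree T_b, d_{G−e}(s,u) ≥ d_T(s,x) + w(g). -/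
open SimpleGraph

/-- Let `e = (a,b)` be a failing edge of an SPT `T` of a 2-edge-connected positively
weighted graph `G`, and let `g = (x,y)` be a swap edge for `e` minimizing
`d_T(s,x') + w(x',v')` over all swap edges `(x',v')` for `e`.  Then for every vertex `u` of
the detached subtree `T_b`, `d_{G−e}(s,u) ≥ d_T(s,x) + w(g)`. -/
theorem good_swap_edge_lower_bound {V : Type*} [Fintype V]
    (G T : SimpleGraph V) (W : V → V → ℝ) (s a b : V)
    (hWpos : ∀ u w : V, G.Adj u w → 0 < W u w)
    (hWsymm : ∀ u w : V, W u w = W w u)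
    (hGconn : G.Connected)
    (h2ec : ∀ e' ∈ G.edgeSet, (G.deleteEdges {e'}).Connected)
    (hTG : T ≤ G) (hT : T.IsTree)
    (hSPT : ∀ u : V, wdist W T s u = wdist W G s u)
    (he : s(a, b) ∈ T.edgeSet)
    (hb : ¬ (T.deleteEdges {s(a, b)}).Reachable s b)
    (x y : V) (hg : swapEdge T G a b x y)
    (hgmin : ∀ x' v' : V, swapEdge T G a b x' v' →
      wdist W T s x + W x y ≤ wdist W T s x' + W x' v') :
    ∀ u : V, (T.deleteEdges {s(a, b)}).Reachable b u →
      wdist W T s x + W x y ≤ wdist W (G.deleteEdges {s(a, b)}) s u := by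
  intro u hu
  set e : Sym2 V := s(a, b) with he_def
  set H : SimpleGraph V := G.deleteEdges {e} with hH_def
  have hHG : H ≤ G := SimpleGraph.deleteEdges_le _
  set R : V → Prop := fun z => (T.deleteEdges {e}).Reachable b z with hR_def
  -- nonnegativity of weighted lengths of walks in any subgraph of G
  have hwlen_nonneg : ∀ {K : SimpleGraph V}, K ≤ G → ∀ {c d : V} (p : K.Walk c d),
      0 ≤ wlen W p := by
    intro K hK c d p
    apply List.sum_nonneg
    intro r hr
    simp only [List.mem_map] at hr
    obtain ⟨dd, _, rfl⟩ := hr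
    exact (hWpos _ _ (hK dd.adj)).le
  -- wlen of mapLe
  have hwlen_mapLe : ∀ {K K' : SimpleGraph V} (h : K ≤ K') {c d : V} (p : K.Walk c d),
      wlen W (p.mapLe h) = wlen W p := by
    intro K K' h c d p
    induction p with
    | nil => simp [wlen]
    | cons ha p ih => simp [wlen] at ih ⊢; exact ih
  -- a lower bound on any walk in H from a vertex outside T_b to a vertex inside T_b
  have key : ∀ {c d : V} (p : H.Walk c d), ¬ R c → R d →
      ∃ (x' v' : V) (q : H.Walk c x') (r : H.Walk v' d),
        H.Adj x' v' ∧ ¬ R x' ∧ R v' ∧ wlen W p = wlen W q + W x' v' + wlen W r := by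
    intro c d p
    induction p with
    | nil => intro hc hd; exact absurd hd hc
    | cons h p ih =>
      rename_i c m d
      intro hc hd
      by_cases hm : R m
      · exact ⟨c, m, SimpleGraph.Walk.nil, p, h, hc, hm, by simp [wlen]⟩
      · obtain ⟨x', v', q, r, h1, h2, h3, h4⟩ := ih hm hd
        exact ⟨x', v', SimpleGraph.Walk.cons h q, r, h1, h2, h3, by
          simp [wlen] at h4 ⊢; linarith⟩
  -- the distance set in H is nonempty
  have hedgeG : e ∈ G.edgeSet := hTG he
  have hreach : H.Reachable s u := ((h2ec e hedgeG).preconnected s u)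
  obtain ⟨p0⟩ := hreach
  -- every walk in H from s to u has length at least the bound
  have hbound : ∀ p : H.Walk s u, wdist W T s x + W x y ≤ wlen W p := by
    intro p
    obtain ⟨x', v', q, r, hadj, hx', hv', hlen⟩ := key p (fun hc => hb hc.symm) hu
    -- (x', v') is a swap edge
    have hadjG : G.Adj x' v' := hHG hadj
    have hne : s(x', v') ≠ e := by
      intro hEq
      have := hadj
      rw [hH_def, SimpleGraph.deleteEdges_adj] at this
      exact this.2 (by simp [hEq])
    have hnotT : s(x', v') ∉ T.edgeSet := by
      intro hmem
      have hadjT : (T.deleteEdges {e}).Adj x' v' := by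
        rw [SimpleGraph.deleteEdges_adj]
        exact ⟨hmem, by simpa using hne⟩
      exact hx' (hv'.trans hadjT.reachable.symm)
    have hswap : swapEdge T G a b x' v' := ⟨hadjG, hnotT, hx', hv'⟩
    -- d_G(s,x') ≤ wlen q
    have hq : wdist W G s x' ≤ wlen W q := by
      have hmem : wlen W (q.mapLe hHG) ∈ {z : ℝ | ∃ p : G.Walk s x', z = wlen W p} :=
        ⟨q.mapLe hHG, rfl⟩
      have hbdd : BddBelow {z : ℝ | ∃ p : G.Walk s x', z = wlen W p} := by
        refine ⟨0, ?_⟩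
        rintro z ⟨p', rfl⟩
        exact hwlen_nonneg le_rfl p'
      calc wdist W G s x' ≤ wlen W (q.mapLe hHG) := csInf_le hbdd hmem
        _ = wlen W q := hwlen_mapLe hHG q
    have hrnn : 0 ≤ wlen W r := hwlen_nonneg (le_trans hHG le_rfl) r
    have := hgmin x' v' hswap
    rw [hSPT x'] at this
    linarith
  -- conclude via le_csInf
  refine le_csInf ⟨wlen W p0, p0, rfl⟩ ?_
  rintro z ⟨p, rfl⟩
  exact hbound p
end
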